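/- Two ℂ-valued *-functors ω₁, ω₂ on a commutative full C*-category C are unitarily equivalent (i.e. related by a natural transformation with values in the unit circle 𝕋) if and only if ω₁ and ω₂ agree on each diagonal C*-algebra Hom_C(A,A), for all objects A. -/

import Mathlib

/-- The data and axioms of a (small) C*-category. -/
class CStarCat (Obj : Type*) (Hom : Obj → Obj → Type*)
    [∀ A B, NormedAddCommGroup (Hom A B)] [∀ A B, NormedSpace ℂ (Hom A B)]
    [∀ A B, CompleteSpace (Hom A B)] where
  comp : ∀ {A B C : Obj}, Hom B C → Hom A B → Hom A C
  id : ∀ A : Obj, Hom A A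
  star : ∀ {A B : Obj}, Hom A B → Hom B A
  comp_assoc : ∀ {A B C D : Obj} (f : Hom C D) (g : Hom B C) (h : Hom A B),
    comp (comp f g) h = comp f (comp g h)
  id_comp : ∀ {A B : Obj} (f : Hom A B), comp (id B) f = f
  comp_id : ∀ {A B : Obj} (f : Hom A B), comp f (id A) = f
  comp_add_left : ∀ {A B C : Obj} (f : Hom B C) (g h : Hom A B),
    comp f (g + h) = comp f g + comp f h
  comp_add_right : ∀ {A B C : Obj} (f g : Hom B C) (h : Hom A B),
    comp (f + g) h = comp f h + comp g h
  comp_smul_left : ∀ {A B C : Obj} (c : ℂ) (f : Hom B C) (g : Hom A B),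
    comp f (c • g) = c • comp f g
  comp_smul_right : ∀ {A B C : Obj} (c : ℂ) (f : Hom B C) (g : Hom A B),
    comp (c • f) g = c • comp f g
  norm_comp_le : ∀ {A B C : Obj} (f : Hom B C) (g : Hom A B), ‖comp f g‖ ≤ ‖f‖ * ‖g‖
  star_star : ∀ {A B : Obj} (f : Hom A B), star (star f) = f
  star_add : ∀ {A B : Obj} (f g : Hom A B), star (f + g) = star f + star g
  star_smul : ∀ {A B : Obj} (c : ℂ) (f : Hom A B),
    star (c • f) = (starRingEnd ℂ c) • star f
  star_comp : ∀ {A B C : Obj} (f : Hom B C) (g : Hom A B),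
    star (comp f g) = comp (star g) (star f)
  norm_star_comp_self : ∀ {A B : Obj} (f : Hom A B), ‖comp (star f) f‖ = ‖f‖ ^ 2
  star_comp_self_positive : ∀ {A B : Obj} (f : Hom A B),
    ∃ g : Hom A A, comp (star f) f = comp (star g) g

variable (Obj : Type*) (Hom : Obj → Obj → Type*)
  [∀ A B, NormedAddCommGroup (Hom A B)] [∀ A B, NormedSpace ℂ (Hom A B)]
  [∀ A B, CompleteSpace (Hom A B)] [C : CStarCat Obj Hom]

/-- A `ℂ`-valued *-functor on a C*-category: linear on each hom-space, multiplicative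
under composition, respecting the involution, and sending identities to `1`. -/
structure IsStarFunctor (ω : ∀ A B : Obj, Hom A B → ℂ) : Prop where
  map_add : ∀ (A B : Obj) (f g : Hom A B), ω A B (f + g) = ω A B f + ω A B g
  map_smul : ∀ (A B : Obj) (c : ℂ) (f : Hom A B), ω A B (c • f) = c * ω A B f
  map_comp : ∀ (A B C' : Obj) (f : Hom B C') (g : Hom A B),
    ω A C' (CStarCat.comp f g) = ω B C' f * ω A B g
  map_star : ∀ (A B : Obj) (f : Hom A B),
    ω B A (CStarCat.star f) = (starRingEnd ℂ) (ω A B f)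
  map_id : ∀ A : Obj, ω A A (CStarCat.id (Hom := Hom) A) = 1


theorem aux_char_bound (A : Obj) (φ : Hom A A → ℂ)
    (hadd : ∀ f g, φ (f + g) = φ f + φ g)
    (hsmul : ∀ (c : ℂ) f, φ (c • f) = c * φ f)
    (hmul : ∀ f g, φ (CStarCat.comp f g) = φ f * φ g)
    (a : Hom A A) : ‖φ a‖ ≤ ‖a‖ := by
  by_contra hlt
  push_neg at hlt
  have hφa : φ a ≠ 0 := by
    intro h0; rw [h0] at hlt; simp at hlt
    exact absurd hlt (not_lt.2 (norm_nonneg a))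
  set b : Hom A A := (φ a)⁻¹ • a with hb
  have hφb : φ b = 1 := by rw [hb, hsmul, inv_mul_cancel₀ hφa]
  have hbn : ‖b‖ < 1 := by
    rw [hb, norm_smul, norm_inv]
    rw [inv_mul_lt_iff₀ (lt_of_le_of_lt (norm_nonneg a) hlt), mul_one]
    exact hlt
  set pw : ℕ → Hom A A := fun n => Nat.rec b (fun _ s => CStarCat.comp b s) n with hpw
  have hpw0 : pw 0 = b := rfl
  have hpwS : ∀ n, pw (n + 1) = CStarCat.comp b (pw n) := fun n => rfl
  have hpwn : ∀ n, ‖pw n‖ ≤ ‖b‖ ^ (n + 1) := by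
    intro n; induction n with
    | zero => simp [hpw0]
    | succ n ih =>
        rw [hpwS]
        calc ‖CStarCat.comp b (pw n)‖ ≤ ‖b‖ * ‖pw n‖ := CStarCat.norm_comp_le _ _
        _ ≤ ‖b‖ * ‖b‖ ^ (n + 1) := by
            exact mul_le_mul_of_nonneg_left ih (norm_nonneg b)
        _ = ‖b‖ ^ (n + 2) := by ring
  have hsum : Summable pw := by
    apply Summable.of_norm_bounded (g := fun n => ‖b‖ ^ (n + 1)) ?_ hpwn
    simpa [pow_succ, mul_comm] using
      (summable_geometric_of_lt_one (norm_nonneg b) hbn).mul_left ‖b‖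
  set L : Hom A A →L[ℂ] Hom A A :=
    LinearMap.mkContinuous
      { toFun := fun x => CStarCat.comp b x
        map_add' := fun x y => CStarCat.comp_add_left b x y
        map_smul' := fun c x => CStarCat.comp_smul_left c b x } ‖b‖
      (fun x => CStarCat.norm_comp_le b x) with hL
  have hLapp : ∀ x, L x = CStarCat.comp b x := fun x => rfl
  set s : Hom A A := ∑' n, pw n with hs
  have hdecomp : s = b + CStarCat.comp b s := by
    have h1 : CStarCat.comp b s = ∑' n, pw (n + 1) := by
      rw [← hLapp, hs, L.map_tsum hsum]
      rfl
    rw [h1, hs, hsum.tsum_eq_zero_add, hpw0]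
  have : φ s = 1 + φ s := by
    conv_lhs => rw [hdecomp]
    rw [hadd, hmul, hφb, one_mul]
  exact one_ne_zero (right_eq_add.mp this)

theorem aux_exists_ne_zero {ω : ∀ A B : Obj, Hom A B → ℂ}
    (h : IsStarFunctor Obj Hom ω)
    (hfull : ∀ A B : Obj, closure (↑(Submodule.span ℂ
      (Set.range fun p : Hom A B × Hom A B =>
        CStarCat.comp (CStarCat.star p.1) p.2)) : Set (Hom A A)) = Set.univ)
    (A B : Obj) : ∃ x : Hom A B, ω A B x ≠ 0 := by
  by_contra hc
  push_neg at hc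
  set φ := ω A A with hφ
  have hbound : ∀ a : Hom A A, ‖φ a‖ ≤ ‖a‖ :=
    aux_char_bound Obj Hom A φ (h.map_add A A) (h.map_smul A A) (h.map_comp A A A)
  have hcont : Continuous φ := by
    have hlin : IsLinearMap ℂ φ := ⟨h.map_add A A, fun c x => by
      rw [hφ, h.map_smul A A]; simp⟩
    exact AddMonoidHomClass.continuous_of_bound (IsLinearMap.mk' φ hlin) 1
      (fun x => by simpa using hbound x)
  set V := Submodule.span ℂ (Set.range fun p : Hom A B × Hom A B =>
    CStarCat.comp (CStarCat.star p.1) p.2) with hV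
  have hzero : ∀ v ∈ V, φ v = 0 := by
    intro v hv
    induction hv using Submodule.span_induction with
    | mem x hx =>
        obtain ⟨p, rfl⟩ := hx
        show ω A A _ = 0
        rw [h.map_comp A B A, h.map_star A B, hc p.1, hc p.2]
        simp
    | zero =>
        have := h.map_smul A A 0 0
        simpa using this
    | add x y _ _ hx hy =>
        rw [hφ] at hx hy
        show ω A A _ = 0
        rw [h.map_add A A, hx, hy]; ring
    | smul c x _ hx =>
        show ω A A _ = 0
        rw [h.map_smul A A]
        rw [hφ] at hx
        rw [hx]; ring
  have hsub : closure (↑V : Set (Hom A A)) ⊆ φ ⁻¹' {0} := by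
    apply closure_minimal _ (isClosed_singleton.preimage hcont)
    intro v hv; exact hzero v hv
  have hidmem : CStarCat.id (Hom := Hom) A ∈ φ ⁻¹' {0} := by
    apply hsub; rw [hfull A B]; trivial
  have h0 : φ (CStarCat.id (Hom := Hom) A) = 0 := hidmem
  rw [hφ, h.map_id A] at h0
  exact one_ne_zero h0
/-- Two `ℂ`-valued *-functors on a commutative full C*-category are unitarily
equivalent (related by a `𝕋`-valued natural transformation) if and only if they agree
on every diagonal C*-algebra `Hom(A, A)`. -/
theorem starFunctors_unitarily_equivalent_iff_agree_on_diagonals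
    (hcomm : ∀ (A : Obj) (f g : Hom A A),
      CStarCat.comp f g = CStarCat.comp g f)
    (hfull : ∀ A B : Obj, closure (↑(Submodule.span ℂ
      (Set.range fun p : Hom A B × Hom A B =>
        CStarCat.comp (CStarCat.star p.1) p.2)) : Set (Hom A A)) = Set.univ)
    (ω₁ ω₂ : ∀ A B : Obj, Hom A B → ℂ)
    (h₁ : IsStarFunctor Obj Hom ω₁) (h₂ : IsStarFunctor Obj Hom ω₂) :
    (∃ ν : Obj → ℂ, (∀ A : Obj, ‖ν A‖ = 1) ∧
      ∀ (A B : Obj) (x : Hom A B), ω₂ A B x = ν B * ω₁ A B x * (ν A)⁻¹) ↔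
    (∀ (A : Obj) (x : Hom A A), ω₁ A A x = ω₂ A A x) := by
  constructor
  · rintro ⟨ν, hν1, hν2⟩ A x
    have hνA : ν A ≠ 0 := by
      intro h0; have := hν1 A; rw [h0] at this; simp at this
    rw [hν2 A A x]
    field_simp
  · intro hdiag
    by_cases hO : Nonempty Obj
    swap
    · exact ⟨fun _ => 1, fun A => absurd ⟨A⟩ hO, fun A B x => absurd ⟨A⟩ hO⟩
    have key : ∀ (A B : Obj) (x y : Hom A B),
        (starRingEnd ℂ) (ω₁ A B x) * ω₁ A B y =
        (starRingEnd ℂ) (ω₂ A B x) * ω₂ A B y := by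
      intro A B x y
      have := hdiag A (CStarCat.comp (CStarCat.star x) y)
      rwa [h₁.map_comp A B A, h₂.map_comp A B A, h₁.map_star A B, h₂.map_star A B]
        at this
    choose x₀ hx₀ using aux_exists_ne_zero Obj Hom h₁ hfull
    obtain ⟨μ, hμdef⟩ : ∃ μ : Obj → Obj → ℂ,
        μ = fun A B => ω₂ A B (x₀ A B) / ω₁ A B (x₀ A B) := ⟨_, rfl⟩
    have hb : ∀ A B : Obj, ω₂ A B (x₀ A B) ≠ 0 := by
      intro A B hb0
      have hn := key A B (x₀ A B) (x₀ A B)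
      rw [hb0] at hn
      simp only [map_zero, mul_zero, zero_mul] at hn
      rcases mul_eq_zero.mp hn with hn | hn
      · exact hx₀ A B (by simpa using congrArg (starRingEnd ℂ) hn)
      · exact hx₀ A B hn
    have hca : ∀ A B : Obj, (starRingEnd ℂ) (ω₁ A B (x₀ A B)) ≠ 0 := by
      intro A B h0
      exact hx₀ A B (by simpa using congrArg (starRingEnd ℂ) h0)
    have hμ : ∀ (A B : Obj) (y : Hom A B), ω₂ A B y = μ A B * ω₁ A B y := by
      intro A B y
      have hk := key A B (x₀ A B) y
      have hn := key A B (x₀ A B) (x₀ A B)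
      have h3 : (starRingEnd ℂ) (ω₁ A B (x₀ A B)) * (ω₂ A B (x₀ A B) * ω₁ A B y) =
          (starRingEnd ℂ) (ω₁ A B (x₀ A B)) * (ω₁ A B (x₀ A B) * ω₂ A B y) := by
        linear_combination ω₂ A B (x₀ A B) * hk - ω₂ A B y * hn
      have h4 := mul_left_cancel₀ (hca A B) h3
      rw [hμdef]
      simp only []
      rw [div_mul_eq_mul_div, eq_div_iff (hx₀ A B)]
      linear_combination -h4
    have hnorm_eq : ∀ A B : Obj, ‖ω₁ A B (x₀ A B)‖ = ‖ω₂ A B (x₀ A B)‖ := by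
      intro A B
      have hn := key A B (x₀ A B) (x₀ A B)
      have h4 : ‖ω₁ A B (x₀ A B)‖ * ‖ω₁ A B (x₀ A B)‖ =
          ‖ω₂ A B (x₀ A B)‖ * ‖ω₂ A B (x₀ A B)‖ := by
        have := congrArg (fun z => ‖z‖) hn
        simpa [norm_mul, RCLike.norm_conj] using this
      have h5 := norm_nonneg (ω₁ A B (x₀ A B))
      have h6 := norm_nonneg (ω₂ A B (x₀ A B))
      nlinarith [h4, h5, h6]
    have hμnorm : ∀ A B : Obj, ‖μ A B‖ = 1 := by
      intro A B
      rw [hμdef]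
      simp only [norm_div]
      rw [← hnorm_eq A B]
      have hne : ‖ω₁ A B (x₀ A B)‖ ≠ 0 := norm_ne_zero_iff.mpr (hx₀ A B)
      exact div_self hne
    have hμne : ∀ A B : Obj, μ A B ≠ 0 := by
      intro A B h0
      have := hμnorm A B
      rw [h0] at this; simp at this
    have hcoc : ∀ A B C' : Obj, μ A C' = μ B C' * μ A B := by
      intro A B C'
      have hx := hx₀ A B
      have hy := hx₀ B C'
      have hz1 : ω₁ A C' (CStarCat.comp (x₀ B C') (x₀ A B)) =
          ω₁ B C' (x₀ B C') * ω₁ A B (x₀ A B) := h₁.map_comp A B C' _ _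
      have hz2 : ω₂ A C' (CStarCat.comp (x₀ B C') (x₀ A B)) =
          ω₂ B C' (x₀ B C') * ω₂ A B (x₀ A B) := h₂.map_comp A B C' _ _
      have e1 := hμ A C' (CStarCat.comp (x₀ B C') (x₀ A B))
      rw [hz2, hz1, hμ B C' (x₀ B C'), hμ A B (x₀ A B)] at e1
      have e2 : μ B C' * μ A B * (ω₁ B C' (x₀ B C') * ω₁ A B (x₀ A B)) =
          μ A C' * (ω₁ B C' (x₀ B C') * ω₁ A B (x₀ A B)) := by
        linear_combination e1
      exact (mul_right_cancel₀ (mul_ne_zero hy hx) e2).symm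
    obtain ⟨A₀⟩ := hO
    refine ⟨fun B => μ A₀ B, fun B => hμnorm A₀ B, ?_⟩
    intro A B x
    have hAA : μ A₀ A ≠ 0 := hμne A₀ A
    have hc := hcoc A₀ A B
    show ω₂ A B x = μ A₀ B * ω₁ A B x * (μ A₀ A)⁻¹
    rw [hμ A B x, hc]
    field_simp
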